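/- In the linear regression setup, let F_n be the empirical distribution of the true residuals ε_{n1},...,ε_{nn} and F̂_n the empirical distribution of the centered estimated residuals. Then the 2-Wasserstein distance satisfies d₂(F_n, F̂_n) ≤ (1/√n) ‖((1/n) 𝟙𝟙ᵀ + Π)^{1/2} ε_n‖₂, where Π = X_n(X_nᵀX_n)⁻¹X_nᵀ ∈ ℝ^{n×n} is the orthogonal projection onto the column space of X_n and 𝟙 ∈ ℝⁿ is the all-ones vector. -/

import Mathlib

open MeasureTheory Matrix
open scoped ENNReal NNReal BigOperators

noncomputable section

/-- Euclidean norm on `Fin d → ℝ`. -/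
def euclNorm {d : ℕ} (v : Fin d → ℝ) : ℝ := Real.sqrt (∑ i, v i ^ 2)

/-- `q`-Wasserstein distance between measures on `Fin d → ℝ` (Euclidean norm cost). -/
def wassE (q : ℝ) {d : ℕ} (μ ν : Measure (Fin d → ℝ)) : ℝ :=
  sInf { r : ℝ | ∃ γ : Measure ((Fin d → ℝ) × (Fin d → ℝ)),
    γ.map Prod.fst = μ ∧ γ.map Prod.snd = ν ∧
    r = (∫ z, euclNorm (z.1 - z.2) ^ q ∂γ) ^ (1 / q) }

/-- `q`-Wasserstein distance between measures on `ℝ`. -/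
def wassR (q : ℝ) (μ ν : Measure ℝ) : ℝ :=
  sInf { r : ℝ | ∃ γ : Measure (ℝ × ℝ),
    γ.map Prod.fst = μ ∧ γ.map Prod.snd = ν ∧
    r = (∫ z, |z.1 - z.2| ^ q ∂γ) ^ (1 / q) }

/-- Empirical measure of `k` points. -/
def empMeasure {E : Type*} [MeasurableSpace E] {k : ℕ} (pts : Fin k → E) : Measure E :=
  (k : ℝ≥0∞)⁻¹ • ∑ i, Measure.dirac (pts i)

instance empMeasure.instIsFiniteMeasure {E : Type*} [MeasurableSpace E] {k : ℕ}
    (pts : Fin k → E) : IsFiniteMeasure (empMeasure pts) := by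
  constructor
  have h : (∑ i, Measure.dirac (pts i)) Set.univ = (k : ℝ≥0∞) := by
    simp [Measure.finset_sum_apply]
  rw [empMeasure, Measure.smul_apply, h, smul_eq_mul]
  by_cases hk : k = 0
  · subst hk; simp
  · rw [ENNReal.inv_mul_cancel (by exact_mod_cast hk) (ENNReal.natCast_ne_top k)]
    exact ENNReal.one_lt_top

/-- Spectral norm (operator norm w.r.t. Euclidean norms). -/
def specNorm {m n : ℕ} (A : Matrix (Fin m) (Fin n) ℝ) : ℝ :=
  ‖LinearMap.toContinuousLinearMap (Matrix.toEuclideanLin A)‖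

/-- Orlicz (quasi-)norm of order `α` of the identity under a distribution `F` on `ℝ`. -/
def orlicz (α : ℝ) (F : Measure ℝ) : ℝ :=
  sInf { t : ℝ | 0 < t ∧ ∫ x, Real.exp ((|x| / t) ^ α) ∂F ≤ 2 }

/-- The OLS map `(XᵀX)⁻¹Xᵀ`. -/
def olsM {n p : ℕ} (X : Matrix (Fin n) (Fin p) ℝ) : Matrix (Fin p) (Fin n) ℝ :=
  (Xᵀ * X)⁻¹ * Xᵀ

/-- Center a vector by subtracting the mean of its entries. -/
def center {n : ℕ} (v : Fin n → ℝ) : Fin n → ℝ := fun i => v i - (∑ j, v j) / n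

/-- Projection onto the column space of `X`. -/
def projMat {n p : ℕ} (X : Matrix (Fin n) (Fin p) ℝ) : Matrix (Fin n) (Fin n) ℝ :=
  X * (Xᵀ * X)⁻¹ * Xᵀ

/-- The matrix `(1/n)𝟙𝟙ᵀ + Π`. -/
def covMat {n p : ℕ} (X : Matrix (Fin n) (Fin p) ℝ) : Matrix (Fin n) (Fin n) ℝ :=
  (n : ℝ)⁻¹ • Matrix.of (fun _ _ => (1 : ℝ)) + projMat X

/-- Square root of a positive semidefinite matrix: the definition `Matrix.PosSemidef.sqrt`
of the older Mathlib, which has since been removed. -/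
def Matrix.PosSemidef.sqrt {m : Type*} [Fintype m] [DecidableEq m]
    {A : Matrix m m ℝ} (hA : A.PosSemidef) : Matrix m m ℝ :=
  hA.1.eigenvectorUnitary.1 * diagonal ((fun x : ℝ => Real.sqrt x) ∘ hA.1.eigenvalues) *
    (star hA.1.eigenvectorUnitary : Matrix m m ℝ)

/-- Uniform distribution on `Fin n`. -/
def unifFin (n : ℕ) : Measure (Fin n) := empMeasure (fun i : Fin n => i)


/-! ### Auxiliary lemmas -/

lemma psdSqrt_isHermitian {m : Type*} [Fintype m] [DecidableEq m]
    {A : Matrix m m ℝ} (hA : A.PosSemidef) : hA.sqrt.IsHermitian := by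
  unfold IsHermitian Matrix.PosSemidef.sqrt
  rw [conjTranspose_mul, conjTranspose_mul, diagonal_conjTranspose, star_eq_conjTranspose,
    conjTranspose_conjTranspose, Matrix.mul_assoc, star_trivial]

lemma psdSqrt_mul_self {m : Type*} [Fintype m] [DecidableEq m]
    {A : Matrix m m ℝ} (hA : A.PosSemidef) : hA.sqrt * hA.sqrt = A := by
  unfold Matrix.PosSemidef.sqrt
  have hU : (star hA.1.eigenvectorUnitary : Matrix m m ℝ) * hA.1.eigenvectorUnitary.1 = 1 :=
    Unitary.star_mul_self_of_mem hA.1.eigenvectorUnitary.2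
  have hD : diagonal ((fun x : ℝ => Real.sqrt x) ∘ hA.1.eigenvalues) *
      diagonal ((fun x : ℝ => Real.sqrt x) ∘ hA.1.eigenvalues) = diagonal hA.1.eigenvalues := by
    rw [diagonal_mul_diagonal]
    congr 1; funext i
    exact Real.mul_self_sqrt (hA.eigenvalues_nonneg i)
  calc _ = hA.1.eigenvectorUnitary.1 * (diagonal ((fun x : ℝ => Real.sqrt x) ∘ hA.1.eigenvalues) *
      ((star hA.1.eigenvectorUnitary : Matrix m m ℝ) * hA.1.eigenvectorUnitary.1) *
      diagonal ((fun x : ℝ => Real.sqrt x) ∘ hA.1.eigenvalues)) *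
      (star hA.1.eigenvectorUnitary : Matrix m m ℝ) := by simp only [Matrix.mul_assoc]
    _ = A := by
      rw [hU, Matrix.mul_one, hD]
      conv_rhs => rw [hA.1.spectral_theorem]
      simp [Unitary.conjStarAlgAut_apply]


lemma map_empMeasure {E F : Type*} [MeasurableSpace E] [MeasurableSpace F] {k : ℕ}
    (pts : Fin k → E) {g : E → F} (hg : Measurable g) :
    (empMeasure pts).map g = empMeasure (g ∘ pts) := by
  unfold empMeasure
  rw [Measure.map_smul]
  congr 1
  classical
  induction (Finset.univ : Finset (Fin k)) using Finset.induction with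
  | empty => simp
  | insert a s h ih =>
    rw [Finset.sum_insert h, Finset.sum_insert h, Measure.map_add _ _ hg, ih,
      Measure.map_dirac' hg]
    rfl

lemma integrable_dirac_of_measurable {E : Type*} [MeasurableSpace E]
    [MeasurableSingletonClass E] {f : E → ℝ} (hf : Measurable f) (a : E) :
    Integrable f (Measure.dirac a) := by
  refine ⟨hf.aestronglyMeasurable, ?_⟩
  rw [HasFiniteIntegral, lintegral_dirac]
  exact ENNReal.coe_lt_top

lemma integral_empMeasure {E : Type*} [MeasurableSpace E] [MeasurableSingletonClass E]
    {k : ℕ} (pts : Fin k → E) {f : E → ℝ} (hf : Measurable f) :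
    ∫ x, f x ∂(empMeasure pts) = (k : ℝ)⁻¹ * ∑ i, f (pts i) := by
  unfold empMeasure
  rw [integral_smul_measure,
    integral_finset_sum_measure (fun i _ => integrable_dirac_of_measurable hf (pts i))]
  simp [integral_dirac, ENNReal.toReal_inv]

lemma quadform_eq {n : ℕ} (B : Matrix (Fin n) (Fin n) ℝ) (x : Fin n → ℝ) :
    x ⬝ᵥ (Bᵀ * B).mulVec x = (B.mulVec x) ⬝ᵥ (B.mulVec x) := by
  rw [← Matrix.mulVec_mulVec, Matrix.dotProduct_mulVec, Matrix.vecMul_transpose]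

lemma det_unit {n p : ℕ} (X : Matrix (Fin n) (Fin p) ℝ) (hX : X.rank = p) :
    IsUnit (Xᵀ * X).det := by
  have h1 : Module.finrank ℝ (LinearMap.range (Xᵀ * X).mulVecLin) = p := by
    have h := Matrix.rank_transpose_mul_self X
    rw [hX] at h
    exact h
  have h2 : LinearMap.range (Xᵀ * X).mulVecLin = ⊤ :=
    Submodule.eq_top_of_finrank_eq (by rw [h1, Module.finrank_pi]; simp)
  have hsurj : Function.Surjective (Xᵀ * X).mulVec := by
    intro v; obtain ⟨w, hw⟩ := LinearMap.range_eq_top.mp h2 v; exact ⟨w, hw⟩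
  exact (Matrix.isUnit_iff_isUnit_det _).mp (Matrix.mulVec_surjective_iff_isUnit.mp hsurj)

lemma projMat_mul_self {n p : ℕ} (X : Matrix (Fin n) (Fin p) ℝ) (hX : X.rank = p) :
    projMat X * projMat X = projMat X := by
  have hdet := det_unit X hX
  unfold projMat
  calc X * (Xᵀ * X)⁻¹ * Xᵀ * (X * (Xᵀ * X)⁻¹ * Xᵀ)
      = X * (Xᵀ * X)⁻¹ * ((Xᵀ * X) * ((Xᵀ * X)⁻¹ * Xᵀ)) := by
        simp only [Matrix.mul_assoc]
    _ = X * (Xᵀ * X)⁻¹ * Xᵀ := by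
        rw [Matrix.mul_nonsing_inv_cancel_left _ _ hdet]

lemma projMat_transpose {n p : ℕ} (X : Matrix (Fin n) (Fin p) ℝ) :
    (projMat X)ᵀ = projMat X := by
  unfold projMat
  rw [Matrix.transpose_mul, Matrix.transpose_mul, Matrix.transpose_transpose,
    Matrix.transpose_nonsing_inv, Matrix.transpose_mul, Matrix.transpose_transpose,
    Matrix.mul_assoc]

lemma projMat_mul_X {n p : ℕ} (X : Matrix (Fin n) (Fin p) ℝ) (hX : X.rank = p) :
    projMat X * X = X := by
  have hdet := det_unit X hX
  unfold projMat
  rw [Matrix.mul_assoc, Matrix.nonsing_inv_mul_cancel_right _ _ hdet]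

lemma onesQ_mul_self (n : ℕ) :
    ((n : ℝ)⁻¹ • Matrix.of (fun _ _ => (1 : ℝ)) : Matrix (Fin n) (Fin n) ℝ) *
      ((n : ℝ)⁻¹ • Matrix.of (fun _ _ => (1 : ℝ))) =
    (n : ℝ)⁻¹ • Matrix.of (fun _ _ => (1 : ℝ)) := by
  ext i j
  have hn : (n : ℝ) ≠ 0 := Nat.cast_ne_zero.mpr (Nat.pos_of_ne_zero (by
    rintro rfl; exact i.elim0)).ne'
  simp [Matrix.mul_apply, Finset.sum_const, Finset.card_univ]
  field_simp

lemma key_identity {n p : ℕ} (X : Matrix (Fin n) (Fin p) ℝ) (hX : X.rank = p) :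
    covMat X =
      ((projMat X + (n : ℝ)⁻¹ • Matrix.of (fun _ _ => (1 : ℝ)) -
          projMat X * ((n : ℝ)⁻¹ • Matrix.of (fun _ _ => (1 : ℝ)))) *
        (projMat X + (n : ℝ)⁻¹ • Matrix.of (fun _ _ => (1 : ℝ)) -
          ((n : ℝ)⁻¹ • Matrix.of (fun _ _ => (1 : ℝ))) * projMat X)) +
      (projMat X * ((n : ℝ)⁻¹ • Matrix.of (fun _ _ => (1 : ℝ)))) *
        (((n : ℝ)⁻¹ • Matrix.of (fun _ _ => (1 : ℝ))) * projMat X) := by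
  set P := projMat X with hPdef
  set Q : Matrix (Fin n) (Fin n) ℝ := (n : ℝ)⁻¹ • Matrix.of (fun _ _ => (1 : ℝ)) with hQdef
  have hPP : P * P = P := projMat_mul_self X hX
  have hQQ : Q * Q = Q := onesQ_mul_self n
  have h1 : Q * (Q * P) = Q * P := by rw [← Matrix.mul_assoc, hQQ]
  have h2 : P * (Q * (Q * P)) = P * (Q * P) := by rw [h1]
  unfold covMat
  simp only [← hPdef, ← hQdef]
  simp only [Matrix.mul_sub, Matrix.sub_mul, Matrix.mul_add, Matrix.add_mul, Matrix.mul_assoc,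
    hPP, hQQ, h1, h2]
  abel

/-- Lemma 3 of the paper:
`d₂(F_n, F̂_n) ≤ (1/√n) ‖((1/n)𝟙𝟙ᵀ + Π)^{1/2} ε_n‖₂`, where `F_n` is the empirical distribution
of the true residuals, `F̂_n` the centered empirical distribution of the estimated residuals, and
`Π = X(XᵀX)⁻¹Xᵀ`. -/
theorem stmt8 (n p : ℕ) (X : Matrix (Fin n) (Fin p) ℝ) (hX : X.rank = p)
    (hPSD : (covMat X).PosSemidef) (β : Fin p → ℝ) (ε : Fin n → ℝ) :
    let y := X.mulVec β + ε
    let bhat := (olsM X).mulVec y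
    let rhat := y - X.mulVec bhat
    wassR 2 (empMeasure ε) (empMeasure (center rhat)) ≤
      (Real.sqrt n)⁻¹ * euclNorm (hPSD.sqrt.mulVec ε) := by
  intro y bhat rhat
  classical
  set P := projMat X with hPdef
  set Q : Matrix (Fin n) (Fin n) ℝ := (n : ℝ)⁻¹ • Matrix.of (fun _ _ => (1 : ℝ)) with hQdef
  set S := hPSD.sqrt with hSdef
  set c := center rhat with hcdef
  -- rhat = ε - P ε
  have hrhat : rhat = ε - P.mulVec ε := by
    have hXb : X.mulVec bhat = P.mulVec y := by
      show X.mulVec ((olsM X).mulVec y) = P.mulVec y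
      rw [Matrix.mulVec_mulVec]
      rw [hPdef]
      unfold olsM projMat
      rw [Matrix.mul_assoc]
    have hPy : P.mulVec y = X.mulVec β + P.mulVec ε := by
      show P.mulVec (X.mulVec β + ε) = _
      rw [Matrix.mulVec_add, Matrix.mulVec_mulVec, projMat_mul_X X hX]
    show y - X.mulVec bhat = ε - P.mulVec ε
    rw [hXb, hPy]
    show X.mulVec β + ε - (X.mulVec β + P.mulVec ε) = ε - P.mulVec ε
    abel
  -- center v = v - Q v
  have hcenterQ : ∀ v : Fin n → ℝ, center v = v - Q.mulVec v := by
    intro v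
    funext i
    simp only [center, Pi.sub_apply, hQdef, Matrix.mulVec, dotProduct,
      Matrix.smul_apply, Matrix.of_apply, smul_eq_mul, mul_one, one_mul]
    rw [Finset.sum_div]
    congr 1
    exact Finset.sum_congr rfl fun j _ => by rw [div_eq_inv_mul]
  -- ε - c = A ε  with A = P + Q - Q*P
  have hdiff : ε - c = (P + Q - Q * P).mulVec ε := by
    rw [hcdef, hcenterQ, hrhat, Matrix.mulVec_sub, Matrix.sub_mulVec, Matrix.add_mulVec,
      Matrix.mulVec_mulVec]
    abel
  -- transpose facts
  have hQt : Qᵀ = Q := by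
    ext i j
    simp [hQdef]
  have hAt : (P + Q - Q * P)ᵀ = P + Q - P * Q := by
    rw [Matrix.transpose_sub, Matrix.transpose_add, Matrix.transpose_mul,
      projMat_transpose X, hQt]
  have hQPt : (Q * P)ᵀ = P * Q := by
    rw [Matrix.transpose_mul, projMat_transpose X, hQt]
  -- quadratic form identity
  have hSt : Sᵀ = S := by
    rw [← Matrix.conjTranspose_eq_transpose_of_trivial]
    exact psdSqrt_isHermitian hPSD
  have hquadS : ε ⬝ᵥ (covMat X).mulVec ε = (S.mulVec ε) ⬝ᵥ (S.mulVec ε) := by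
    rw [← quadform_eq S ε, hSt, psdSqrt_mul_self hPSD]
  have hquadA : ε ⬝ᵥ (covMat X).mulVec ε =
      ((P + Q - Q * P).mulVec ε) ⬝ᵥ ((P + Q - Q * P).mulVec ε) +
      ((Q * P).mulVec ε) ⬝ᵥ ((Q * P).mulVec ε) := by
    rw [← quadform_eq (P + Q - Q * P) ε, ← quadform_eq (Q * P) ε, hAt, hQPt]
    rw [key_identity X hX, Matrix.add_mulVec, dotProduct_add]
  -- the key scalar inequality
  have hkey : (∑ i, (ε i - c i) ^ 2) ≤ ∑ i, (S.mulVec ε i) ^ 2 := by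
    have e1 : (∑ i, (ε i - c i) ^ 2) =
        ((P + Q - Q * P).mulVec ε) ⬝ᵥ ((P + Q - Q * P).mulVec ε) := by
      rw [← hdiff]
      unfold dotProduct
      exact Finset.sum_congr rfl fun i _ => by rw [Pi.sub_apply, pow_two]
    have e2 : (∑ i, (S.mulVec ε i) ^ 2) = (S.mulVec ε) ⬝ᵥ (S.mulVec ε) := by
      unfold dotProduct
      exact Finset.sum_congr rfl fun i _ => pow_two _
    rw [e1, e2, ← hquadS, hquadA]
    have hnn : 0 ≤ ((Q * P).mulVec ε) ⬝ᵥ ((Q * P).mulVec ε) :=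
      Finset.sum_nonneg fun i _ => mul_self_nonneg _
    linarith
  -- build the coupling
  set γ : Measure (ℝ × ℝ) := empMeasure (fun i : Fin n => (ε i, c i)) with hγdef
  have hmapfst : γ.map Prod.fst = empMeasure ε := by
    rw [hγdef, map_empMeasure _ measurable_fst]
    rfl
  have hmapsnd : γ.map Prod.snd = empMeasure c := by
    rw [hγdef, map_empMeasure _ measurable_snd]
    rfl
  have hrpow2 : ∀ x : ℝ, |x| ^ (2 : ℝ) = x ^ 2 := fun x => by
    rw [show (2 : ℝ) = ((2 : ℕ) : ℝ) by norm_num, Real.rpow_natCast, sq_abs]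
  have hint : (∫ z : ℝ × ℝ, |z.1 - z.2| ^ (2 : ℝ) ∂γ) =
      (n : ℝ)⁻¹ * ∑ i, (ε i - c i) ^ 2 := by
    have : (fun z : ℝ × ℝ => |z.1 - z.2| ^ (2 : ℝ)) =
        fun z : ℝ × ℝ => (z.1 - z.2) ^ 2 := funext fun z => hrpow2 _
    rw [this, hγdef, integral_empMeasure (f := fun z : ℝ × ℝ => (z.1 - z.2) ^ 2) _ ((measurable_fst.sub measurable_snd).pow_const 2)]
  -- conclude
  have hb : BddBelow { r : ℝ | ∃ γ : Measure (ℝ × ℝ),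
      γ.map Prod.fst = empMeasure ε ∧ γ.map Prod.snd = empMeasure c ∧
      r = (∫ z, |z.1 - z.2| ^ (2 : ℝ) ∂γ) ^ (1 / (2 : ℝ)) } := by
    refine ⟨0, fun r hr => ?_⟩
    obtain ⟨γ', -, -, rfl⟩ := hr
    exact Real.rpow_nonneg
      (integral_nonneg fun z => Real.rpow_nonneg (abs_nonneg _) _) _
  have hmem : ((∫ z : ℝ × ℝ, |z.1 - z.2| ^ (2 : ℝ) ∂γ) ^ (1 / (2 : ℝ))) ∈
      { r : ℝ | ∃ γ : Measure (ℝ × ℝ),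
        γ.map Prod.fst = empMeasure ε ∧ γ.map Prod.snd = empMeasure c ∧
        r = (∫ z, |z.1 - z.2| ^ (2 : ℝ) ∂γ) ^ (1 / (2 : ℝ)) } :=
    ⟨γ, hmapfst, hmapsnd, rfl⟩
  have hle : wassR 2 (empMeasure ε) (empMeasure c) ≤
      ((∫ z : ℝ × ℝ, |z.1 - z.2| ^ (2 : ℝ) ∂γ) ^ (1 / (2 : ℝ))) := csInf_le hb hmem
  refine hle.trans ?_
  rw [hint, ← Real.sqrt_eq_rpow,
    Real.sqrt_mul (inv_nonneg.mpr (Nat.cast_nonneg n)), Real.sqrt_inv]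
  unfold euclNorm
  exact mul_le_mul_of_nonneg_left (Real.sqrt_le_sqrt hkey)
    (inv_nonneg.mpr (Real.sqrt_nonneg _))
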